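/- For symmetric positive-definite matrices P₁, P₂ ∈ 𝒫 (determinant one), defining exp_{P₁}(V) = √(P₁ e^{2P₁⁻¹V} P₁) for V with P₁⁻¹V traceless symmetric, and exp⁻¹_{P₁}(P₂) = P₁ log(√(P₁⁻¹ P₂² P₁⁻¹)), one has exp_{P₁}(exp⁻¹_{P₁}(P₂)) = P₂. -/

import Mathlib

open Matrix

/-- The (total) symmetric positive-semidefinite square root of a matrix. -/
noncomputable def sqrtm {n : ℕ} (A : Matrix (Fin n) (Fin n) ℝ) : Matrix (Fin n) (Fin n) ℝ :=
  letI := Classical.dec A.PosSemidef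
  if h : A.PosSemidef then
    h.1.eigenvectorUnitary.1 * diagonal ((↑) ∘ Real.sqrt ∘ h.1.eigenvalues) *
      (star h.1.eigenvectorUnitary : Matrix (Fin n) (Fin n) ℝ)
  else 0

theorem sqrtm_eq_cfc {n : ℕ} {A : Matrix (Fin n) (Fin n) ℝ} (hA : A.PosSemidef) :
    sqrtm A = cfc Real.sqrt A := by
  rw [sqrtm, dif_pos hA, hA.1.cfc_eq]
  rfl

theorem sqrtm_mul_self' {n : ℕ} {A : Matrix (Fin n) (Fin n) ℝ} (hA : A.PosSemidef) :
    cfc Real.sqrt A * cfc Real.sqrt A = A := by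
  have hs := (posSemidef_iff_isHermitian_and_spectrum_nonneg.mp hA).2
  have hsa : IsSelfAdjoint A := hA.1
  rw [← cfc_mul Real.sqrt Real.sqrt A]
  conv_rhs => rw [← cfc_id ℝ A]
  exact cfc_congr (fun x hx => Real.mul_self_sqrt (hs hx))

theorem sqrtm_sq' {n : ℕ} {P : Matrix (Fin n) (Fin n) ℝ} (hP : P.PosSemidef) :
    sqrtm (P ^ 2) = P := by
  have hs := (posSemidef_iff_isHermitian_and_spectrum_nonneg.mp hP).2
  have hsa : IsSelfAdjoint P := hP.1
  rw [sqrtm_eq_cfc (hP.pow 2), ← cfc_comp_pow Real.sqrt 2 P]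
  conv_rhs => rw [← cfc_id ℝ P]
  exact cfc_congr (fun x hx => Real.sqrt_sq (hs hx))

/-- For `P₁, P₂ ∈ 𝒫`, with `exp_{P₁}(V) = √(P₁ e^{2 P₁⁻¹ V} P₁)` and
`exp⁻¹_{P₁}(P₂) = P₁ log √(P₁⁻¹ P₂² P₁⁻¹)`, one has `exp_{P₁}(exp⁻¹_{P₁}(P₂)) = P₂`.
The matrix logarithm is represented by the symmetric matrix `L` with
`e^L = √(P₁⁻¹ P₂² P₁⁻¹)`. -/
theorem exp_inv_exp (n : ℕ) (P₁ P₂ L : Matrix (Fin n) (Fin n) ℝ)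
    (h₁ : P₁.PosDef) (h₁d : P₁.det = 1) (h₂ : P₂.PosDef) (h₂d : P₂.det = 1)
    (hL : Lᵀ = L)
    (hLexp : NormedSpace.exp L = sqrtm (P₁⁻¹ * P₂ ^ 2 * P₁⁻¹)) :
    sqrtm (P₁ * NormedSpace.exp ((2 : ℝ) • (P₁⁻¹ * (P₁ * L))) * P₁) = P₂ := by
  have hP₁ : IsUnit P₁.det := by rw [h₁d]; exact isUnit_one
  have hPL : P₁⁻¹ * (P₁ * L) = L := by
    rw [← mul_assoc, Matrix.nonsing_inv_mul _ hP₁, one_mul]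
  have hB : (P₁⁻¹ * P₂ ^ 2 * P₁⁻¹).PosSemidef := by
    have h2 : (P₂ ^ 2).PosSemidef := h₂.posSemidef.pow 2
    have := h2.mul_mul_conjTranspose_same P₁⁻¹
    rwa [conjTranspose_nonsing_inv, (Matrix.IsHermitian.eq h₁.isHermitian)] at this
  have hsq : sqrtm (P₁⁻¹ * P₂ ^ 2 * P₁⁻¹) = cfc Real.sqrt (P₁⁻¹ * P₂ ^ 2 * P₁⁻¹) := by
    rw [sqrtm_eq_cfc hB]
  have h2L : NormedSpace.exp ((2 : ℝ) • (P₁⁻¹ * (P₁ * L))) = P₁⁻¹ * P₂ ^ 2 * P₁⁻¹ := by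
    rw [hPL]
    rw [two_smul ℝ L, Matrix.exp_add_of_commute L L (Commute.refl L), hLexp, hsq,
      sqrtm_mul_self' hB]
  rw [h2L]
  have key : P₁ * (P₁⁻¹ * P₂ ^ 2 * P₁⁻¹) * P₁ = P₂ ^ 2 := by
    rw [← mul_assoc, ← mul_assoc, Matrix.mul_nonsing_inv _ hP₁, one_mul,
      mul_assoc, Matrix.nonsing_inv_mul _ hP₁, mul_one]
  rw [key]
  have h2 : (P₂ ^ 2).PosSemidef := h₂.posSemidef.pow 2
  exact sqrtm_sq' h₂.posSemidef
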